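/- The projection homomorphism from Aut(S) to the automorphism group of M_{U,P,L} sending (N, ν) to N is surjective: every monoid automorphism N of M_{U,P,L} admits a bijection ν of X such that (N, ν) ∈ Aut(S). -/

import Mathlib

namespace CubeDance

/-- The set `X` of the 12 major triads, 12 minor triads, and 4 augmented triads. -/
inductive Triad : Type
  | maj : ZMod 12 → Triad
  | min : ZMod 12 → Triad
  | aug : ZMod 4 → Triad
  deriving DecidableEq

/-- Binary relations on `X`. -/
abbrev RelM : Type := Triad → Triad → Prop

/-- Binary relations on `X` form a monoid under relational composition,
with identity the diagonal relation. -/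
instance : Monoid RelM where
  mul R S := fun p q => ∃ r, R p r ∧ S r q
  one := fun p q => p = q
  mul_assoc R S T := by
    funext p q
    apply propext
    constructor
    · rintro ⟨r, ⟨s, h1, h2⟩, h3⟩
      exact ⟨s, h1, r, h2, h3⟩
    · rintro ⟨s, h1, r, h2, h3⟩
      exact ⟨r, ⟨s, h1, h2⟩, h3⟩
  one_mul R := by
    funext p q
    apply propext
    constructor
    · rintro ⟨r, rfl, h⟩
      exact h
    · intro h
      exact ⟨p, rfl, h⟩
  mul_one R := by
    funext p q
    apply propext
    constructor
    · rintro ⟨r, h, rfl⟩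
      exact h
    · intro h
      exact ⟨q, h, rfl⟩

/-- The relation `U`, relating `a_aug` with `x_M` whenever `x ≡ a (mod 4)` and
`a_aug` with `x_m` whenever `x ≡ a + 1 (mod 4)`. -/
def U : RelM := fun p q =>
  match p, q with
  | .aug a, .maj x => (x.val : ZMod 4) = a
  | .maj x, .aug a => (x.val : ZMod 4) = a
  | .aug a, .min x => (x.val : ZMod 4) = a + 1
  | .min x, .aug a => (x.val : ZMod 4) = a + 1
  | _, _ => False

/-- The relation `P`, relating `x_M` with `x_m`, and each augmented triad with itself. -/
def P : RelM := fun p q =>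
  match p, q with
  | .maj x, .min y => x = y
  | .min x, .maj y => x = y
  | .aug a, .aug b => a = b
  | _, _ => False

/-- The relation `L`, relating `x_M` with `(x+4)_m`, and each augmented triad with itself. -/
def L : RelM := fun p q =>
  match p, q with
  | .maj x, .min y => y = x + 4
  | .min y, .maj x => y = x + 4
  | .aug a, .aug b => a = b
  | _, _ => False

/-- The monoid `M_{U,P,L}` generated by the relations `U`, `P` and `L`. -/
def M : Submonoid RelM := Submonoid.closure {U, P, L}

lemma U_mem : U ∈ M := Submonoid.subset_closure (Set.mem_insert _ _)

lemma P_mem : P ∈ M :=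
  Submonoid.subset_closure (Set.mem_insert_of_mem _ (Set.mem_insert _ _))

lemma L_mem : L ∈ M :=
  Submonoid.subset_closure (Set.mem_insert_of_mem _ (Set.mem_insert_of_mem _ rfl))


/-- The compatibility condition defining `Aut(S)`: a pair `(N, ν)` of a monoid automorphism
of `M` and a permutation of `X` such that `p R q` implies `ν(p) N(R) ν(q)` for every
`R ∈ M` and all `p, q ∈ X`. -/
def compat (x : MulAut M × Equiv.Perm Triad) : Prop :=
  ∀ R : M, ∀ pt q : Triad, (↑R : RelM) pt q → (↑(x.1 R) : RelM) (x.2 pt) (x.2 q)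


/-! ### Auxiliary development -/



set_option maxRecDepth 100000
set_option maxHeartbeats 4000000

def triadEquiv : (ZMod 12 ⊕ ZMod 12) ⊕ ZMod 4 ≃ Triad where
  toFun := fun x => match x with
    | .inl (.inl x) => .maj x
    | .inl (.inr x) => .min x
    | .inr a => .aug a
  invFun := fun t => match t with
    | .maj x => .inl (.inl x)
    | .min x => .inl (.inr x)
    | .aug a => .inr a
  left_inv := by rintro ((x|x)|a) <;> rfl
  right_inv := by rintro (x|x|a) <;> rfl

instance : Fintype Triad := Fintype.ofEquiv _ triadEquiv

instance instDecU : ∀ p q : Triad, Decidable (U p q) := fun p q =>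
  match p, q with
  | .aug a, .maj x => inferInstanceAs (Decidable ((x.val : ZMod 4) = a))
  | .maj x, .aug a => inferInstanceAs (Decidable ((x.val : ZMod 4) = a))
  | .aug a, .min x => inferInstanceAs (Decidable ((x.val : ZMod 4) = a + 1))
  | .min x, .aug a => inferInstanceAs (Decidable ((x.val : ZMod 4) = a + 1))
  | .maj _, .maj _ => inferInstanceAs (Decidable False)
  | .maj _, .min _ => inferInstanceAs (Decidable False)
  | .min _, .maj _ => inferInstanceAs (Decidable False)
  | .min _, .min _ => inferInstanceAs (Decidable False)
  | .aug _, .aug _ => inferInstanceAs (Decidable False)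

instance instDecP : ∀ p q : Triad, Decidable (P p q) := fun p q =>
  match p, q with
  | .maj x, .min y => inferInstanceAs (Decidable (x = y))
  | .min x, .maj y => inferInstanceAs (Decidable (x = y))
  | .aug a, .aug b => inferInstanceAs (Decidable (a = b))
  | .maj _, .maj _ => inferInstanceAs (Decidable False)
  | .min _, .min _ => inferInstanceAs (Decidable False)
  | .maj _, .aug _ => inferInstanceAs (Decidable False)
  | .aug _, .maj _ => inferInstanceAs (Decidable False)
  | .min _, .aug _ => inferInstanceAs (Decidable False)
  | .aug _, .min _ => inferInstanceAs (Decidable False)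

instance instDecL : ∀ p q : Triad, Decidable (L p q) := fun p q =>
  match p, q with
  | .maj x, .min y => inferInstanceAs (Decidable (y = x + 4))
  | .min y, .maj x => inferInstanceAs (Decidable (y = x + 4))
  | .aug a, .aug b => inferInstanceAs (Decidable (a = b))
  | .maj _, .maj _ => inferInstanceAs (Decidable False)
  | .min _, .min _ => inferInstanceAs (Decidable False)
  | .maj _, .aug _ => inferInstanceAs (Decidable False)
  | .aug _, .maj _ => inferInstanceAs (Decidable False)
  | .min _, .aug _ => inferInstanceAs (Decidable False)
  | .aug _, .min _ => inferInstanceAs (Decidable False)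

def enc : Triad → Nat
  | .maj x => x.val
  | .min x => 12 + x.val
  | .aug a => 24 + a.val

def dec (j : Nat) : Triad :=
  if j < 12 then .maj (j : ZMod 12) else if j < 24 then .min ((j - 12 : ℕ) : ZMod 12)
  else .aug ((j - 24 : ℕ) : ZMod 4)

lemma dec_enc : ∀ t : Triad, dec (enc t) = t := by decide
lemma enc_dec : ∀ j : Fin 28, enc (dec j.val) = j.val := by decide
lemma enc_lt : ∀ t : Triad, enc t < 28 := by decide

@[reducible] def toRel (m : List Nat) : RelM := fun p q => ((m.getD (enc p) 0).testBit (enc q)) = true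

def mrow (row : Nat) (B : List Nat) : Nat :=
  (List.range 28).foldl (fun acc j => if row.testBit j then acc ||| B.getD j 0 else acc) 0

def mmul (A B : List Nat) : List Nat := A.map (fun row => mrow row B)
def mU : List Nat := [16777216, 33554432, 67108864, 134217728, 16777216, 33554432, 67108864, 134217728, 16777216, 33554432, 67108864, 134217728, 134217728, 16777216, 33554432, 67108864, 134217728, 16777216, 33554432, 67108864, 134217728, 16777216, 33554432, 67108864, 2236689, 4473378, 8946756, 1120392]
def mP : List Nat := [4096, 8192, 16384, 32768, 65536, 131072, 262144, 524288, 1048576, 2097152, 4194304, 8388608, 1, 2, 4, 8, 16, 32, 64, 128, 256, 512, 1024, 2048, 16777216, 33554432, 67108864, 134217728]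
def mL : List Nat := [65536, 131072, 262144, 524288, 1048576, 2097152, 4194304, 8388608, 4096, 8192, 16384, 32768, 256, 512, 1024, 2048, 1, 2, 4, 8, 16, 32, 64, 128, 16777216, 33554432, 67108864, 134217728]
def mone : List Nat := [1, 2, 4, 8, 16, 32, 64, 128, 256, 512, 1024, 2048, 4096, 8192, 16384, 32768, 65536, 131072, 262144, 524288, 1048576, 2097152, 4194304, 8388608, 16777216, 33554432, 67108864, 134217728]
def mPUP : List Nat := [134217728, 16777216, 33554432, 67108864, 134217728, 16777216, 33554432, 67108864, 134217728, 16777216, 33554432, 67108864, 16777216, 33554432, 67108864, 134217728, 16777216, 33554432, 67108864, 134217728, 16777216, 33554432, 67108864, 134217728, 1118754, 2237508, 4475016, 8945937]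
def mPLP : List Nat := [1048576, 2097152, 4194304, 8388608, 4096, 8192, 16384, 32768, 65536, 131072, 262144, 524288, 16, 32, 64, 128, 256, 512, 1024, 2048, 1, 2, 4, 8, 16777216, 33554432, 67108864, 134217728]
def l40 : List (List Nat) := [[1, 2, 4, 8, 16, 32, 64, 128, 256, 512, 1024, 2048, 4096, 8192, 16384, 32768, 65536, 131072, 262144, 524288, 1048576, 2097152, 4194304, 8388608, 16777216, 33554432, 67108864, 134217728],
  [16777216, 33554432, 67108864, 134217728, 16777216, 33554432, 67108864, 134217728, 16777216, 33554432, 67108864, 134217728, 134217728, 16777216, 33554432, 67108864, 134217728, 16777216, 33554432, 67108864, 134217728, 16777216, 33554432, 67108864, 2236689, 4473378, 8946756, 1120392],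
  [4096, 8192, 16384, 32768, 65536, 131072, 262144, 524288, 1048576, 2097152, 4194304, 8388608, 1, 2, 4, 8, 16, 32, 64, 128, 256, 512, 1024, 2048, 16777216, 33554432, 67108864, 134217728],
  [65536, 131072, 262144, 524288, 1048576, 2097152, 4194304, 8388608, 4096, 8192, 16384, 32768, 256, 512, 1024, 2048, 1, 2, 4, 8, 16, 32, 64, 128, 16777216, 33554432, 67108864, 134217728],
  [2236689, 4473378, 8946756, 1120392, 2236689, 4473378, 8946756, 1120392, 2236689, 4473378, 8946756, 1120392, 1120392, 2236689, 4473378, 8946756, 1120392, 2236689, 4473378, 8946756, 1120392, 2236689, 4473378, 8946756, 16777216, 33554432, 67108864, 134217728],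
  [16777216, 33554432, 67108864, 134217728, 16777216, 33554432, 67108864, 134217728, 16777216, 33554432, 67108864, 134217728, 134217728, 16777216, 33554432, 67108864, 134217728, 16777216, 33554432, 67108864, 134217728, 16777216, 33554432, 67108864, 1118754, 2237508, 4475016, 8945937],
  [134217728, 16777216, 33554432, 67108864, 134217728, 16777216, 33554432, 67108864, 134217728, 16777216, 33554432, 67108864, 16777216, 33554432, 67108864, 134217728, 16777216, 33554432, 67108864, 134217728, 16777216, 33554432, 67108864, 134217728, 2236689, 4473378, 8946756, 1120392],
  [256, 512, 1024, 2048, 1, 2, 4, 8, 16, 32, 64, 128, 65536, 131072, 262144, 524288, 1048576, 2097152, 4194304, 8388608, 4096, 8192, 16384, 32768, 16777216, 33554432, 67108864, 134217728],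
  [16, 32, 64, 128, 256, 512, 1024, 2048, 1, 2, 4, 8, 1048576, 2097152, 4194304, 8388608, 4096, 8192, 16384, 32768, 65536, 131072, 262144, 524288, 16777216, 33554432, 67108864, 134217728],
  [1118754, 2237508, 4475016, 8945937, 1118754, 2237508, 4475016, 8945937, 1118754, 2237508, 4475016, 8945937, 8945937, 1118754, 2237508, 4475016, 8945937, 1118754, 2237508, 4475016, 8945937, 1118754, 2237508, 4475016, 16777216, 33554432, 67108864, 134217728],
  [2236689, 4473378, 8946756, 1120392, 2236689, 4473378, 8946756, 1120392, 2236689, 4473378, 8946756, 1120392, 1120392, 2236689, 4473378, 8946756, 1120392, 2236689, 4473378, 8946756, 1120392, 2236689, 4473378, 8946756, 167772160, 83886080, 167772160, 83886080],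
  [1120392, 2236689, 4473378, 8946756, 1120392, 2236689, 4473378, 8946756, 1120392, 2236689, 4473378, 8946756, 2236689, 4473378, 8946756, 1120392, 2236689, 4473378, 8946756, 1120392, 2236689, 4473378, 8946756, 1120392, 16777216, 33554432, 67108864, 134217728],
  [134217728, 16777216, 33554432, 67108864, 134217728, 16777216, 33554432, 67108864, 134217728, 16777216, 33554432, 67108864, 16777216, 33554432, 67108864, 134217728, 16777216, 33554432, 67108864, 134217728, 16777216, 33554432, 67108864, 134217728, 1118754, 2237508, 4475016, 8945937],
  [1048576, 2097152, 4194304, 8388608, 4096, 8192, 16384, 32768, 65536, 131072, 262144, 524288, 16, 32, 64, 128, 256, 512, 1024, 2048, 1, 2, 4, 8, 16777216, 33554432, 67108864, 134217728],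
  [167772160, 83886080, 167772160, 83886080, 167772160, 83886080, 167772160, 83886080, 167772160, 83886080, 167772160, 83886080, 83886080, 167772160, 83886080, 167772160, 83886080, 167772160, 83886080, 167772160, 83886080, 167772160, 83886080, 167772160, 2236689, 4473378, 8946756, 1120392],
  [16777216, 33554432, 67108864, 134217728, 16777216, 33554432, 67108864, 134217728, 16777216, 33554432, 67108864, 134217728, 134217728, 16777216, 33554432, 67108864, 134217728, 16777216, 33554432, 67108864, 134217728, 16777216, 33554432, 67108864, 5593770, 11183445, 5593770, 11183445],
  [1118754, 2237508, 4475016, 8945937, 1118754, 2237508, 4475016, 8945937, 1118754, 2237508, 4475016, 8945937, 8945937, 1118754, 2237508, 4475016, 8945937, 1118754, 2237508, 4475016, 8945937, 1118754, 2237508, 4475016, 167772160, 83886080, 167772160, 83886080],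
  [8945937, 1118754, 2237508, 4475016, 8945937, 1118754, 2237508, 4475016, 8945937, 1118754, 2237508, 4475016, 1118754, 2237508, 4475016, 8945937, 1118754, 2237508, 4475016, 8945937, 1118754, 2237508, 4475016, 8945937, 16777216, 33554432, 67108864, 134217728],
  [1120392, 2236689, 4473378, 8946756, 1120392, 2236689, 4473378, 8946756, 1120392, 2236689, 4473378, 8946756, 2236689, 4473378, 8946756, 1120392, 2236689, 4473378, 8946756, 1120392, 2236689, 4473378, 8946756, 1120392, 167772160, 83886080, 167772160, 83886080],
  [5593770, 11183445, 5593770, 11183445, 5593770, 11183445, 5593770, 11183445, 5593770, 11183445, 5593770, 11183445, 11183445, 5593770, 11183445, 5593770, 11183445, 5593770, 11183445, 5593770, 11183445, 5593770, 11183445, 5593770, 16777216, 33554432, 67108864, 134217728],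
  [167772160, 83886080, 167772160, 83886080, 167772160, 83886080, 167772160, 83886080, 167772160, 83886080, 167772160, 83886080, 83886080, 167772160, 83886080, 167772160, 83886080, 167772160, 83886080, 167772160, 83886080, 167772160, 83886080, 167772160, 1118754, 2237508, 4475016, 8945937],
  [16777216, 33554432, 67108864, 134217728, 16777216, 33554432, 67108864, 134217728, 16777216, 33554432, 67108864, 134217728, 134217728, 16777216, 33554432, 67108864, 134217728, 16777216, 33554432, 67108864, 134217728, 16777216, 33554432, 67108864, 11183445, 5593770, 11183445, 5593770],
  [167772160, 83886080, 167772160, 83886080, 167772160, 83886080, 167772160, 83886080, 167772160, 83886080, 167772160, 83886080, 83886080, 167772160, 83886080, 167772160, 83886080, 167772160, 83886080, 167772160, 83886080, 167772160, 83886080, 167772160, 5593770, 11183445, 5593770, 11183445],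
  [83886080, 167772160, 83886080, 167772160, 83886080, 167772160, 83886080, 167772160, 83886080, 167772160, 83886080, 167772160, 167772160, 83886080, 167772160, 83886080, 167772160, 83886080, 167772160, 83886080, 167772160, 83886080, 167772160, 83886080, 2236689, 4473378, 8946756, 1120392],
  [134217728, 16777216, 33554432, 67108864, 134217728, 16777216, 33554432, 67108864, 134217728, 16777216, 33554432, 67108864, 16777216, 33554432, 67108864, 134217728, 16777216, 33554432, 67108864, 134217728, 16777216, 33554432, 67108864, 134217728, 5593770, 11183445, 5593770, 11183445],
  [8945937, 1118754, 2237508, 4475016, 8945937, 1118754, 2237508, 4475016, 8945937, 1118754, 2237508, 4475016, 1118754, 2237508, 4475016, 8945937, 1118754, 2237508, 4475016, 8945937, 1118754, 2237508, 4475016, 8945937, 167772160, 83886080, 167772160, 83886080],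
  [11183445, 5593770, 11183445, 5593770, 11183445, 5593770, 11183445, 5593770, 11183445, 5593770, 11183445, 5593770, 5593770, 11183445, 5593770, 11183445, 5593770, 11183445, 5593770, 11183445, 5593770, 11183445, 5593770, 11183445, 16777216, 33554432, 67108864, 134217728],
  [5593770, 11183445, 5593770, 11183445, 5593770, 11183445, 5593770, 11183445, 5593770, 11183445, 5593770, 11183445, 11183445, 5593770, 11183445, 5593770, 11183445, 5593770, 11183445, 5593770, 11183445, 5593770, 11183445, 5593770, 167772160, 83886080, 167772160, 83886080],
  [2236689, 4473378, 8946756, 1120392, 2236689, 4473378, 8946756, 1120392, 2236689, 4473378, 8946756, 1120392, 1120392, 2236689, 4473378, 8946756, 1120392, 2236689, 4473378, 8946756, 1120392, 2236689, 4473378, 8946756, 83886080, 167772160, 83886080, 167772160],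
  [167772160, 83886080, 167772160, 83886080, 167772160, 83886080, 167772160, 83886080, 167772160, 83886080, 167772160, 83886080, 83886080, 167772160, 83886080, 167772160, 83886080, 167772160, 83886080, 167772160, 83886080, 167772160, 83886080, 167772160, 11183445, 5593770, 11183445, 5593770],
  [83886080, 167772160, 83886080, 167772160, 83886080, 167772160, 83886080, 167772160, 83886080, 167772160, 83886080, 167772160, 167772160, 83886080, 167772160, 83886080, 167772160, 83886080, 167772160, 83886080, 167772160, 83886080, 167772160, 83886080, 1118754, 2237508, 4475016, 8945937],
  [134217728, 16777216, 33554432, 67108864, 134217728, 16777216, 33554432, 67108864, 134217728, 16777216, 33554432, 67108864, 16777216, 33554432, 67108864, 134217728, 16777216, 33554432, 67108864, 134217728, 16777216, 33554432, 67108864, 134217728, 11183445, 5593770, 11183445, 5593770],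
  [83886080, 167772160, 83886080, 167772160, 83886080, 167772160, 83886080, 167772160, 83886080, 167772160, 83886080, 167772160, 167772160, 83886080, 167772160, 83886080, 167772160, 83886080, 167772160, 83886080, 167772160, 83886080, 167772160, 83886080, 5593770, 11183445, 5593770, 11183445],
  [11183445, 5593770, 11183445, 5593770, 11183445, 5593770, 11183445, 5593770, 11183445, 5593770, 11183445, 5593770, 5593770, 11183445, 5593770, 11183445, 5593770, 11183445, 5593770, 11183445, 5593770, 11183445, 5593770, 11183445, 167772160, 83886080, 167772160, 83886080],
  [1118754, 2237508, 4475016, 8945937, 1118754, 2237508, 4475016, 8945937, 1118754, 2237508, 4475016, 8945937, 8945937, 1118754, 2237508, 4475016, 8945937, 1118754, 2237508, 4475016, 8945937, 1118754, 2237508, 4475016, 83886080, 167772160, 83886080, 167772160],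
  [5593770, 11183445, 5593770, 11183445, 5593770, 11183445, 5593770, 11183445, 5593770, 11183445, 5593770, 11183445, 11183445, 5593770, 11183445, 5593770, 11183445, 5593770, 11183445, 5593770, 11183445, 5593770, 11183445, 5593770, 83886080, 167772160, 83886080, 167772160],
  [1120392, 2236689, 4473378, 8946756, 1120392, 2236689, 4473378, 8946756, 1120392, 2236689, 4473378, 8946756, 2236689, 4473378, 8946756, 1120392, 2236689, 4473378, 8946756, 1120392, 2236689, 4473378, 8946756, 1120392, 83886080, 167772160, 83886080, 167772160],
  [83886080, 167772160, 83886080, 167772160, 83886080, 167772160, 83886080, 167772160, 83886080, 167772160, 83886080, 167772160, 167772160, 83886080, 167772160, 83886080, 167772160, 83886080, 167772160, 83886080, 167772160, 83886080, 167772160, 83886080, 11183445, 5593770, 11183445, 5593770],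
  [11183445, 5593770, 11183445, 5593770, 11183445, 5593770, 11183445, 5593770, 11183445, 5593770, 11183445, 5593770, 5593770, 11183445, 5593770, 11183445, 5593770, 11183445, 5593770, 11183445, 5593770, 11183445, 5593770, 11183445, 83886080, 167772160, 83886080, 167772160],
  [8945937, 1118754, 2237508, 4475016, 8945937, 1118754, 2237508, 4475016, 8945937, 1118754, 2237508, 4475016, 1118754, 2237508, 4475016, 8945937, 1118754, 2237508, 4475016, 8945937, 1118754, 2237508, 4475016, 8945937, 83886080, 167772160, 83886080, 167772160]]
def pairs6 : List (List Nat × List Nat) := [([4096, 8192, 16384, 32768, 65536, 131072, 262144, 524288, 1048576, 2097152, 4194304, 8388608, 1, 2, 4, 8, 16, 32, 64, 128, 256, 512, 1024, 2048, 16777216, 33554432, 67108864, 134217728], [65536, 131072, 262144, 524288, 1048576, 2097152, 4194304, 8388608, 4096, 8192, 16384, 32768, 256, 512, 1024, 2048, 1, 2, 4, 8, 16, 32, 64, 128, 16777216, 33554432, 67108864, 134217728]), ([4096, 8192, 16384, 32768, 65536, 131072, 262144, 524288, 1048576, 2097152, 4194304, 8388608, 1, 2, 4, 8, 16, 32, 64,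 128, 256, 512, 1024, 2048, 16777216, 33554432, 67108864, 134217728], [1048576, 2097152, 4194304, 8388608, 4096, 8192, 16384, 32768, 65536, 131072, 262144, 524288, 16, 32, 64, 128, 256, 512, 1024, 2048, 1, 2, 4, 8, 16777216, 33554432, 67108864, 134217728]), ([65536, 131072, 262144, 524288, 1048576, 2097152, 4194304, 8388608, 4096, 8192, 16384, 32768, 256, 512, 1024, 2048, 1, 2, 4, 8, 16, 32, 64, 128, 16777216, 33554432, 67108864, 134217728], [4096, 8192, 16384, 32768, 65536, 131072, 262144, 524288, 1048576, 2097152, 4194304, 8388608, 1, 2, 4, 8, 16, 32, 64, 128, 256, 512, 1024, 2048, 16777216, 33554432, 67108864, 134217728]), ([65536, 131072, 262144, 524288, 1048576, 2097152, 4194304, 8388608, 4096, 8192, 16384, 32768, 256, 512, 1024, 2048, 1, 2, 4, 8, 16, 32, 64, 128, 16777216, 33554432, 67108864, 134217728], [1048576, 2097152, 4194304, 8388608, 4096, 8192, 16384, 32768, 65536, 131072, 262144, 524288, 16, 32, 64, 128, 256, 512, 1024, 2048, 1, 2, 4, 8, 16777216, 33554432, 67108864, 134217728]), ([1048576, 2097152,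 4194304, 8388608, 4096, 8192, 16384, 32768, 65536, 131072, 262144, 524288, 16, 32, 64, 128, 256, 512, 1024, 2048, 1, 2, 4, 8, 16777216, 33554432, 67108864, 134217728], [4096, 8192, 16384, 32768, 65536, 131072, 262144, 524288, 1048576, 2097152, 4194304, 8388608, 1, 2, 4, 8, 16, 32, 64, 128, 256, 512, 1024, 2048, 16777216, 33554432, 67108864, 134217728]), ([1048576, 2097152, 4194304, 8388608, 4096, 8192, 16384, 32768, 65536, 131072, 262144, 524288, 16, 32, 64, 128, 256, 512, 1024, 2048, 1, 2, 4, 8, 16777216, 33554432, 67108864, 134217728], [65536, 131072, 262144, 524288, 1048576, 2097152, 4194304, 8388608, 4096, 8192, 16384, 32768, 256, 512, 1024, 2048, 1, 2, 4, 8, 16, 32, 64, 128, 16777216, 33554432, 67108864, 134217728])]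
def vf1 : List Nat := [4, 9, 2, 7, 0, 5, 10, 3, 8, 1, 6, 11, 12, 17, 22, 15, 20, 13, 18, 23, 16, 21, 14, 19, 24, 25, 26, 27]
def vg1 : List Nat := [4, 9, 2, 7, 0, 5, 10, 3, 8, 1, 6, 11, 12, 17, 22, 15, 20, 13, 18, 23, 16, 21, 14, 19, 24, 25, 26, 27]
def vf2 : List Nat := [8, 1, 6, 11, 4, 9, 2, 7, 0, 5, 10, 3, 20, 13, 18, 23, 16, 21, 14, 19, 12, 17, 22, 15, 24, 25, 26, 27]
def vg2 : List Nat := [8, 1, 6, 11, 4, 9, 2, 7, 0, 5, 10, 3, 20, 13, 18, 23, 16, 21, 14, 19, 12, 17, 22, 15, 24, 25, 26, 27]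
def vf3 : List Nat := [20, 21, 22, 23, 12, 13, 14, 15, 16, 17, 18, 19, 4, 5, 6, 7, 8, 9, 10, 11, 0, 1, 2, 3, 24, 25, 26, 27]
def vg3 : List Nat := [20, 21, 22, 23, 12, 13, 14, 15, 16, 17, 18, 19, 4, 5, 6, 7, 8, 9, 10, 11, 0, 1, 2, 3, 24, 25, 26, 27]
def vf4 : List Nat := [20, 13, 18, 23, 16, 21, 14, 19, 12, 17, 22, 15, 8, 1, 6, 11, 4, 9, 2, 7, 0, 5, 10, 3, 24, 25, 26, 27]
def vg4 : List Nat := [20, 13, 18, 23, 16, 21, 14, 19, 12, 17, 22, 15, 8, 1, 6, 11, 4, 9, 2, 7, 0, 5, 10, 3, 24, 25, 26, 27]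
def vf5 : List Nat := [12, 13, 14, 15, 16, 17, 18, 19, 20, 21, 22, 23, 0, 1, 2, 3, 4, 5, 6, 7, 8, 9, 10, 11, 24, 25, 26, 27]
def vg5 : List Nat := [12, 13, 14, 15, 16, 17, 18, 19, 20, 21, 22, 23, 0, 1, 2, 3, 4, 5, 6, 7, 8, 9, 10, 11, 24, 25, 26, 27]
def vf6 : List Nat := [16, 17, 18, 19, 20, 21, 22, 23, 12, 13, 14, 15, 8, 9, 10, 11, 0, 1, 2, 3, 4, 5, 6, 7, 24, 25, 26, 27]
def vg6 : List Nat := [16, 17, 18, 19, 20, 21, 22, 23, 12, 13, 14, 15, 8, 9, 10, 11, 0, 1, 2, 3, 4, 5, 6, 7, 24, 25, 26, 27]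
def vf7 : List Nat := [0, 5, 10, 3, 8, 1, 6, 11, 4, 9, 2, 7, 16, 21, 14, 19, 12, 17, 22, 15, 20, 13, 18, 23, 24, 25, 26, 27]
def vg7 : List Nat := [0, 5, 10, 3, 8, 1, 6, 11, 4, 9, 2, 7, 16, 21, 14, 19, 12, 17, 22, 15, 20, 13, 18, 23, 24, 25, 26, 27]
def vf8 : List Nat := [8, 9, 10, 11, 0, 1, 2, 3, 4, 5, 6, 7, 16, 17, 18, 19, 20, 21, 22, 23, 12, 13, 14, 15, 24, 25, 26, 27]
def vg8 : List Nat := [4, 5, 6, 7, 8, 9, 10, 11, 0, 1, 2, 3, 20, 21, 22, 23, 12, 13, 14, 15, 16, 17, 18, 19, 24, 25, 26, 27]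
def vf9 : List Nat := [12, 17, 22, 15, 20, 13, 18, 23, 16, 21, 14, 19, 4, 9, 2, 7, 0, 5, 10, 3, 8, 1, 6, 11, 24, 25, 26, 27]
def vg9 : List Nat := [16, 21, 14, 19, 12, 17, 22, 15, 20, 13, 18, 23, 0, 5, 10, 3, 8, 1, 6, 11, 4, 9, 2, 7, 24, 25, 26, 27]
def vf10 : List Nat := [0, 1, 2, 3, 4, 5, 6, 7, 8, 9, 10, 11, 12, 13, 14, 15, 16, 17, 18, 19, 20, 21, 22, 23, 24, 25, 26, 27]
def vg10 : List Nat := [0, 1, 2, 3, 4, 5, 6, 7, 8, 9, 10, 11, 12, 13, 14, 15, 16, 17, 18, 19, 20, 21, 22, 23, 24, 25, 26, 27]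
def vf11 : List Nat := [16, 21, 14, 19, 12, 17, 22, 15, 20, 13, 18, 23, 0, 5, 10, 3, 8, 1, 6, 11, 4, 9, 2, 7, 24, 25, 26, 27]
def vg11 : List Nat := [12, 17, 22, 15, 20, 13, 18, 23, 16, 21, 14, 19, 4, 9, 2, 7, 0, 5, 10, 3, 8, 1, 6, 11, 24, 25, 26, 27]
def vf12 : List Nat := [4, 5, 6, 7, 8, 9, 10, 11, 0, 1, 2, 3, 20, 21, 22, 23, 12, 13, 14, 15, 16, 17, 18, 19, 24, 25, 26, 27]
def vg12 : List Nat := [8, 9, 10, 11, 0, 1, 2, 3, 4, 5, 6, 7, 16, 17, 18, 19, 20, 21, 22, 23, 12, 13, 14, 15, 24, 25, 26, 27]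

def wa1 : List Nat := [0]
def wb1 : List Nat := [0, 0, 0]
def wa2 : List Nat := [0, 2, 0, 1]
def wb2 : List Nat := [2, 0, 1, 0]
def wa3 : List Nat := []
def wb3 : List Nat := [0, 0]

lemma U_eq : U = toRel mU := by
  funext p q; rw [eq_iff_iff]; revert p q; decide

lemma P_eq : P = toRel mP := by
  funext p q; rw [eq_iff_iff]; revert p q; decide

lemma L_eq : L = toRel mL := by
  funext p q; rw [eq_iff_iff]; revert p q; decide

lemma one_eq : (1 : RelM) = toRel mone := by
  funext p q
  exact propext ((show toRel mone p q ↔ p = q by revert p q; decide).symm)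

lemma testBit_foldl (l : List Nat) (row acc : Nat) (B : List Nat) (q : Nat) :
    (l.foldl (fun acc j => if row.testBit j then acc ||| B.getD j 0 else acc) acc).testBit q
    = (acc.testBit q || l.any fun j => row.testBit j && (B.getD j 0).testBit q) := by
  induction l generalizing acc with
  | nil => simp
  | cons j t ih =>
    simp only [List.foldl_cons, List.any_cons, ih]
    by_cases h : row.testBit j
    · simp [h, Nat.testBit_lor, Bool.or_assoc]
    · simp [h]

lemma testBit_mrow (row : Nat) (B : List Nat) (q : Nat) :
    (mrow row B).testBit q
    = (List.range 28).any fun j => row.testBit j && (B.getD j 0).testBit q := by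
  rw [mrow, testBit_foldl]
  simp [Nat.zero_testBit]

lemma toRel_mmul (A B : List Nat) (hA : A.length = 28) :
    toRel (mmul A B) = toRel A * toRel B := by
  funext p q
  rw [eq_iff_iff]
  have h1 : enc p < A.length := hA ▸ enc_lt p
  have h2 : enc p < (mmul A B).length := by simpa [mmul] using h1
  have key : (mmul A B).getD (enc p) 0 = mrow (A.getD (enc p) 0) B := by
    rw [List.getD_eq_getElem _ _ h2, List.getD_eq_getElem _ _ h1]
    simp [mmul]
  show ((mmul A B).getD (enc p) 0).testBit (enc q) = true ↔ ∃ r, toRel A p r ∧ toRel B r q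
  rw [key, testBit_mrow, List.any_eq_true]
  constructor
  · rintro ⟨j, hj, hb⟩
    rw [List.mem_range] at hj
    rw [Bool.and_eq_true] at hb
    refine ⟨dec j, ?_, ?_⟩
    · show (A.getD (enc p) 0).testBit (enc (dec j)) = true
      rw [enc_dec ⟨j, hj⟩]; exact hb.1
    · show (B.getD (enc (dec j)) 0).testBit (enc q) = true
      rw [enc_dec ⟨j, hj⟩]; exact hb.2
  · rintro ⟨r, h1, h2⟩
    exact ⟨enc r, List.mem_range.mpr (enc_lt r), by rw [Bool.and_eq_true]; exact ⟨h1, h2⟩⟩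

@[reducible] def WF (m : List Nat) : Prop := m.length = 28 ∧ ∀ r ∈ m, r < 2 ^ 28

lemma l40_wf : ∀ m ∈ l40, WF m := by decide

lemma getD_lt {B : List Nat} (hB : ∀ r ∈ B, r < 2 ^ 28) (j : Nat) : B.getD j 0 < 2 ^ 28 := by
  by_cases h : j < B.length
  · rw [List.getD_eq_getElem _ _ h]; exact hB _ (List.getElem_mem h)
  · rw [List.getD_eq_default _ _ (le_of_not_gt h)]; positivity

lemma foldl_lt (row : Nat) {B : List Nat} (hB : ∀ r ∈ B, r < 2 ^ 28) (l : List Nat)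
    (acc : Nat) (hacc : acc < 2 ^ 28) :
    (l.foldl (fun acc j => if row.testBit j then acc ||| B.getD j 0 else acc) acc) < 2 ^ 28 := by
  induction l generalizing acc with
  | nil => simpa using hacc
  | cons j t ih =>
    rw [List.foldl_cons]
    apply ih
    split
    · exact Nat.or_lt_two_pow hacc (getD_lt hB j)
    · exact hacc

lemma mrow_lt (row : Nat) {B : List Nat} (hB : ∀ r ∈ B, r < 2 ^ 28) :
    mrow row B < 2 ^ 28 :=
  foldl_lt row hB _ 0 (by positivity)

lemma mmul_wf {A B : List Nat} (hA : WF A) (hB : WF B) : WF (mmul A B) := by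
  constructor
  · simpa [mmul] using hA.1
  · intro r hr
    rw [mmul, List.mem_map] at hr
    obtain ⟨row, _, rfl⟩ := hr
    exact mrow_lt row hB.2

lemma toRel_inj {m m' : List Nat} (hm : WF m) (hm' : WF m') (h : toRel m = toRel m') :
    m = m' := by
  apply List.ext_getElem (hm.1.trans hm'.1.symm)
  intro i hi hi'
  apply Nat.eq_of_testBit_eq
  intro j
  by_cases hj : j < 28
  · have hi28 : i < 28 := hm.1 ▸ hi
    have hp := congrFun (congrFun h (dec i)) (dec j)
    simp only [toRel] at hp
    rw [enc_dec ⟨i, hi28⟩, enc_dec ⟨j, hj⟩, List.getD_eq_getElem _ _ hi,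
      List.getD_eq_getElem _ _ hi'] at hp
    rw [eq_iff_iff] at hp
    exact Bool.coe_iff_coe.mp hp
  · have b1 : m[i] < 2 ^ j :=
      lt_of_lt_of_le (hm.2 _ (List.getElem_mem hi))
        (Nat.pow_le_pow_right (by norm_num) (le_of_not_gt hj))
    have b2 : m'[i] < 2 ^ j :=
      lt_of_lt_of_le (hm'.2 _ (List.getElem_mem hi'))
        (Nat.pow_le_pow_right (by norm_num) (le_of_not_gt hj))
    rw [Nat.testBit_lt_two_pow b1, Nat.testBit_lt_two_pow b2]

lemma mul_gen_mem : ∀ b ∈ l40, mmul mU b ∈ l40 ∧ mmul mP b ∈ l40 ∧ mmul mL b ∈ l40 := by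
  decide

lemma prod_mem_l40 : ∀ l : List RelM, (∀ y ∈ l, y ∈ ({U, P, L} : Set RelM)) →
    ∃ b ∈ l40, l.prod = toRel b := by
  intro l
  induction l with
  | nil => exact fun _ => ⟨mone, by decide, one_eq⟩
  | cons g t ih =>
    intro hl
    obtain ⟨b, hb, hbe⟩ := ih (fun y hy => hl y (List.mem_cons_of_mem _ hy))
    have hg := hl g List.mem_cons_self
    rw [List.prod_cons, hbe]
    simp only [Set.mem_insert_iff, Set.mem_singleton_iff] at hg
    rcases hg with rfl | rfl | rfl
    · exact ⟨mmul mU b, (mul_gen_mem b hb).1, by rw [U_eq, toRel_mmul mU b (by rfl)]⟩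
    · exact ⟨mmul mP b, (mul_gen_mem b hb).2.1, by rw [P_eq, toRel_mmul mP b (by rfl)]⟩
    · exact ⟨mmul mL b, (mul_gen_mem b hb).2.2, by rw [L_eq, toRel_mmul mL b (by rfl)]⟩

lemma memM : ∀ r : RelM, r ∈ M → ∃ b ∈ l40, r = toRel b := by
  intro r hr
  obtain ⟨l, hl, rfl⟩ := Submonoid.exists_list_of_mem_closure hr
  exact prod_mem_l40 l hl

def u' : M := ⟨U, U_mem⟩
def p' : M := ⟨P, P_mem⟩
def l' : M := ⟨L, L_mem⟩

def evalT (a b c : M) : List Nat → M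
  | [] => 1
  | i :: w => (if i = 0 then a else if i = 1 then b else c) * evalT a b c w

def evalMask (u p l : List Nat) : List Nat → List Nat
  | [] => mone
  | i :: w => mmul (if i = 0 then u else if i = 1 then p else l) (evalMask u p l w)

lemma evalMask_wf {u p l : List Nat} (hu : WF u) (hp : WF p) (hl : WF l) (w : List Nat) :
    WF (evalMask u p l w) := by
  induction w with
  | nil => exact (by decide : WF mone)
  | cons i t ih =>
    apply mmul_wf _ ih
    split
    · exact hu
    · split
      · exact hp
      · exact hl

lemma evalT_coe (a b c : M) (ma mb mc : List Nat)
    (ha : (↑a : RelM) = toRel ma) (hb : (↑b : RelM) = toRel mb) (hc : (↑c : RelM) = toRel mc)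
    (wa : WF ma) (wb : WF mb) (wc : WF mc) (w : List Nat) :
    (↑(evalT a b c w) : RelM) = toRel (evalMask ma mb mc w) := by
  induction w with
  | nil => exact one_eq
  | cons i t ih =>
    show (↑((if i = 0 then a else if i = 1 then b else c) * evalT a b c t) : RelM) = _
    rw [MulMemClass.coe_mul, ih]
    show _ = toRel (mmul (if i = 0 then ma else if i = 1 then mb else mc) _)
    split_ifs with h0 h1
    · rw [toRel_mmul _ _ wa.1, ha]
    · rw [toRel_mmul _ _ wb.1, hb]
    · rw [toRel_mmul _ _ wc.1, hc]

lemma map_evalT (N : MulAut M) (a b c : M) (w : List Nat) :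
    N (evalT a b c w) = evalT (N a) (N b) (N c) w := by
  induction w with
  | nil => exact map_one N
  | cons i t ih =>
    show N ((if i = 0 then a else if i = 1 then b else c) * evalT a b c t) = _
    rw [map_mul, ih]
    congr 1
    split <;> try rfl
    split <;> rfl

lemma key_iff (N : MulAut M) (bu bp bl : List Nat)
    (hu : (↑(N u') : RelM) = toRel bu) (hp : (↑(N p') : RelM) = toRel bp)
    (hl : (↑(N l') : RelM) = toRel bl)
    (wu : WF bu) (wp : WF bp) (wl : WF bl) (wa wb : List Nat) :
    (evalMask mU mP mL wa = evalMask mU mP mL wb) ↔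
      (evalMask bu bp bl wa = evalMask bu bp bl wb) := by
  have wmU : WF mU := by decide
  have wmP : WF mP := by decide
  have wmL : WF mL := by decide
  have cu : (↑u' : RelM) = toRel mU := U_eq
  have cp : (↑p' : RelM) = toRel mP := P_eq
  have cl : (↑l' : RelM) = toRel mL := L_eq
  constructor
  · intro h
    have h1 : (↑(evalT u' p' l' wa) : RelM) = ↑(evalT u' p' l' wb) := by
      rw [evalT_coe _ _ _ _ _ _ cu cp cl wmU wmP wmL,
        evalT_coe _ _ _ _ _ _ cu cp cl wmU wmP wmL]
      exact congrArg toRel h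
    have h2 : evalT u' p' l' wa = evalT u' p' l' wb := Subtype.coe_injective h1
    have h2' := congrArg N h2
    rw [map_evalT, map_evalT] at h2'
    have h3 : toRel (evalMask bu bp bl wa) = toRel (evalMask bu bp bl wb) := by
      rw [← evalT_coe _ _ _ _ _ _ hu hp hl wu wp wl,
        ← evalT_coe _ _ _ _ _ _ hu hp hl wu wp wl, h2']
    exact toRel_inj (evalMask_wf wu wp wl wa) (evalMask_wf wu wp wl wb) h3
  · intro h
    have h1 : (↑(evalT (N u') (N p') (N l') wa) : RelM) = ↑(evalT (N u') (N p') (N l') wb) := by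
      rw [evalT_coe _ _ _ _ _ _ hu hp hl wu wp wl,
        evalT_coe _ _ _ _ _ _ hu hp hl wu wp wl]
      exact congrArg toRel h
    have h2 : evalT (N u') (N p') (N l') wa = evalT (N u') (N p') (N l') wb :=
      Subtype.coe_injective h1
    rw [← map_evalT, ← map_evalT] at h2
    have h2' := N.injective h2
    have h3 : toRel (evalMask mU mP mL wa) = toRel (evalMask mU mP mL wb) := by
      rw [← evalT_coe _ _ _ _ _ _ cu cp cl wmU wmP wmL,
        ← evalT_coe _ _ _ _ _ _ cu cp cl wmU wmP wmL, h2']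
    exact toRel_inj (evalMask_wf wmU wmP wmL wa) (evalMask_wf wmU wmP wmL wb) h3

lemma enc_dec' (j : Nat) (h : j < 28) : enc (dec j) = j := enc_dec ⟨j, h⟩

lemma getD_lt28 {vf : List Nat} (hb : ∀ i ∈ vf, i < 28) (j : Nat) : vf.getD j 0 < 28 := by
  by_cases h : j < vf.length
  · rw [List.getD_eq_getElem _ _ h]; exact hb _ (List.getElem_mem h)
  · rw [List.getD_eq_default _ _ (le_of_not_gt h)]; norm_num

def K (N : MulAut M) (v : Equiv.Perm Triad) : Submonoid RelM where
  carrier := {r | ∃ hr : r ∈ M, ∀ p q : Triad, r p q → (↑(N ⟨r, hr⟩) : RelM) (v p) (v q)}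
  one_mem' := by
    refine ⟨M.one_mem, ?_⟩
    intro p q h
    have e : (⟨(1 : RelM), M.one_mem⟩ : M) = 1 := rfl
    rw [e, map_one]
    exact congrArg v h
  mul_mem' := by
    intro a b ha hb
    obtain ⟨ha, ga⟩ := ha
    obtain ⟨hb, gb⟩ := hb
    refine ⟨M.mul_mem ha hb, ?_⟩
    rintro p q ⟨r, h1, h2⟩
    have e : (⟨a * b, M.mul_mem ha hb⟩ : M) = ⟨a, ha⟩ * ⟨b, hb⟩ := rfl
    rw [e, map_mul]
    exact ⟨v r, ga p r h1, gb r q h2⟩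

lemma compat_of_gens (N : MulAut M) (v : Equiv.Perm Triad)
    (hU : ∀ p q, U p q → (↑(N u') : RelM) (v p) (v q))
    (hP : ∀ p q, P p q → (↑(N p') : RelM) (v p) (v q))
    (hL : ∀ p q, L p q → (↑(N l') : RelM) (v p) (v q)) :
    compat (N, v) := by
  have hle : M ≤ K N v := by
    refine Submonoid.closure_le.mpr ?_
    intro r hr
    simp only [Set.mem_insert_iff, Set.mem_singleton_iff] at hr
    rcases hr with rfl | rfl | rfl
    · exact ⟨U_mem, fun p q h => hU p q h⟩
    · exact ⟨P_mem, fun p q h => hP p q h⟩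
    · exact ⟨L_mem, fun p q h => hL p q h⟩
  intro R p q h
  obtain ⟨hr, g⟩ := hle R.2
  exact g p q h

lemma realize (N : MulAut M) (cu cp cl vf vg : List Nat)
    (hbf : ∀ i ∈ vf, i < 28) (hbg : ∀ i ∈ vg, i < 28)
    (hi1 : ∀ i : Fin 28, vg.getD (vf.getD i.val 0) 0 = i.val)
    (hi2 : ∀ i : Fin 28, vf.getD (vg.getD i.val 0) 0 = i.val)
    (hu : (↑(N u') : RelM) = toRel cu) (hp : (↑(N p') : RelM) = toRel cp)
    (hl : (↑(N l') : RelM) = toRel cl)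
    (du : ∀ i j : Fin 28, (mU.getD i.val 0).testBit j.val = true →
        (cu.getD (vf.getD i.val 0) 0).testBit (vf.getD j.val 0) = true)
    (dp : ∀ i j : Fin 28, (mP.getD i.val 0).testBit j.val = true →
        (cp.getD (vf.getD i.val 0) 0).testBit (vf.getD j.val 0) = true)
    (dl : ∀ i j : Fin 28, (mL.getD i.val 0).testBit j.val = true →
        (cl.getD (vf.getD i.val 0) 0).testBit (vf.getD j.val 0) = true) :
    ∃ v : Equiv.Perm Triad, compat (N, v) := by
  refine ⟨⟨fun t => dec (vf.getD (enc t) 0), fun t => dec (vg.getD (enc t) 0), ?_, ?_⟩,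
      compat_of_gens N _ ?_ ?_ ?_⟩
  · intro t
    show dec (vg.getD (enc (dec (vf.getD (enc t) 0))) 0) = t
    rw [enc_dec' _ (getD_lt28 hbf _), hi1 ⟨enc t, enc_lt t⟩]
    exact dec_enc t
  · intro t
    show dec (vf.getD (enc (dec (vg.getD (enc t) 0))) 0) = t
    rw [enc_dec' _ (getD_lt28 hbg _), hi2 ⟨enc t, enc_lt t⟩]
    exact dec_enc t
  · intro p q h
    rw [hu]
    show (cu.getD (enc (dec (vf.getD (enc p) 0))) 0).testBit (enc (dec (vf.getD (enc q) 0))) = true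
    rw [enc_dec' _ (getD_lt28 hbf _), enc_dec' _ (getD_lt28 hbf _)]
    have h' : toRel mU p q := U_eq ▸ h
    exact du ⟨enc p, enc_lt p⟩ ⟨enc q, enc_lt q⟩ h' 
  · intro p q h
    rw [hp]
    show (cp.getD (enc (dec (vf.getD (enc p) 0))) 0).testBit (enc (dec (vf.getD (enc q) 0))) = true
    rw [enc_dec' _ (getD_lt28 hbf _), enc_dec' _ (getD_lt28 hbf _)]
    have h' : toRel mP p q := P_eq ▸ h
    exact dp ⟨enc p, enc_lt p⟩ ⟨enc q, enc_lt q⟩ h' 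
  · intro p q h
    rw [hl]
    show (cl.getD (enc (dec (vf.getD (enc p) 0))) 0).testBit (enc (dec (vf.getD (enc q) 0))) = true
    rw [enc_dec' _ (getD_lt28 hbf _), enc_dec' _ (getD_lt28 hbf _)]
    have h' : toRel mL p q := L_eq ▸ h
    exact dl ⟨enc p, enc_lt p⟩ ⟨enc q, enc_lt q⟩ h' 

lemma sqOne : ∀ b ∈ l40, mmul b b = mone →
    b = mP ∨ b = mL ∨ b = mPLP ∨ b = mone := by decide

lemma survElim_mP_mL : ∀ b ∈ l40, (evalMask b mP mL wa1 = evalMask b mP mL wb1) →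
    ¬(evalMask b mP mL wa2 = evalMask b mP mL wb2) →
    ¬(evalMask b mP mL wa3 = evalMask b mP mL wb3) →
    b = mU ∨ b = mPUP := by decide

lemma survElim_mP_mPLP : ∀ b ∈ l40, (evalMask b mP mPLP wa1 = evalMask b mP mPLP wb1) →
    ¬(evalMask b mP mPLP wa2 = evalMask b mP mPLP wb2) →
    ¬(evalMask b mP mPLP wa3 = evalMask b mP mPLP wb3) →
    b = mU ∨ b = mPUP := by decide

lemma survElim_mL_mP : ∀ b ∈ l40, (evalMask b mL mP wa1 = evalMask b mL mP wb1) →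
    ¬(evalMask b mL mP wa2 = evalMask b mL mP wb2) →
    ¬(evalMask b mL mP wa3 = evalMask b mL mP wb3) →
    b = mU ∨ b = mPUP := by decide

lemma survElim_mL_mPLP : ∀ b ∈ l40, (evalMask b mL mPLP wa1 = evalMask b mL mPLP wb1) →
    ¬(evalMask b mL mPLP wa2 = evalMask b mL mPLP wb2) →
    ¬(evalMask b mL mPLP wa3 = evalMask b mL mPLP wb3) →
    b = mU ∨ b = mPUP := by decide

lemma survElim_mPLP_mP : ∀ b ∈ l40, (evalMask b mPLP mP wa1 = evalMask b mPLP mP wb1) →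
    ¬(evalMask b mPLP mP wa2 = evalMask b mPLP mP wb2) →
    ¬(evalMask b mPLP mP wa3 = evalMask b mPLP mP wb3) →
    b = mU ∨ b = mPUP := by decide

lemma survElim_mPLP_mL : ∀ b ∈ l40, (evalMask b mPLP mL wa1 = evalMask b mPLP mL wb1) →
    ¬(evalMask b mPLP mL wa2 = evalMask b mPLP mL wb2) →
    ¬(evalMask b mPLP mL wa3 = evalMask b mPLP mL wb3) →
    b = mU ∨ b = mPUP := by decide

/-- Every monoid automorphism `N` of `M_{U,P,L}` admits a bijection `ν` of `X` such that
`(N, ν) ∈ Aut(S)`: the projection `Aut(S) → Aut(M)` is surjective. -/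
theorem autS_projection_surjective (N : MulAut M) :
    ∃ v : Equiv.Perm Triad, compat (N, v) := by
  obtain ⟨bu, hbu40, hbu⟩ := memM _ (N u').2
  obtain ⟨bp, hbp40, hbp⟩ := memM _ (N p').2
  obtain ⟨bl, hbl40, hbl⟩ := memM _ (N l').2
  have wfu := l40_wf _ hbu40
  have wfp := l40_wf _ hbp40
  have wfl := l40_wf _ hbl40
  have cPP : (↑(p' * p') : RelM) = toRel mone := by
    rw [MulMemClass.coe_mul]
    show P * P = _
    rw [P_eq, ← toRel_mmul mP mP (by rfl)]
    exact congrArg toRel (by decide : mmul mP mP = mone)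
  have cLL : (↑(l' * l') : RelM) = toRel mone := by
    rw [MulMemClass.coe_mul]
    show L * L = _
    rw [L_eq, ← toRel_mmul mL mL (by rfl)]
    exact congrArg toRel (by decide : mmul mL mL = mone)
  have hp'2 : p' * p' = 1 := Subtype.coe_injective (cPP.trans one_eq.symm)
  have hl'2 : l' * l' = 1 := Subtype.coe_injective (cLL.trans one_eq.symm)
  have hNp2 : N p' * N p' = 1 := by rw [← map_mul, hp'2, map_one]
  have hNl2 : N l' * N l' = 1 := by rw [← map_mul, hl'2, map_one]
  have hmaskp : mmul bp bp = mone := by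
    apply toRel_inj (mmul_wf wfp wfp) (by decide : WF mone)
    rw [toRel_mmul _ _ wfp.1, ← hbp, ← MulMemClass.coe_mul, hNp2, OneMemClass.coe_one]
    exact one_eq
  have hmaskl : mmul bl bl = mone := by
    apply toRel_inj (mmul_wf wfl wfl) (by decide : WF mone)
    rw [toRel_mmul _ _ wfl.1, ← hbl, ← MulMemClass.coe_mul, hNl2, OneMemClass.coe_one]
    exact one_eq
  have hNp_ne : bp ≠ mone := by
    rintro rfl
    have e1 : N p' = 1 := Subtype.coe_injective (hbp.trans one_eq.symm)
    have e2 : p' = 1 := N.injective (e1.trans (map_one N).symm)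
    have e3 : P = (1 : RelM) := congrArg Subtype.val e2
    rw [P_eq, one_eq] at e3
    exact absurd (toRel_inj (by decide) (by decide) e3) (by decide)
  have hNl_ne : bl ≠ mone := by
    rintro rfl
    have e1 : N l' = 1 := Subtype.coe_injective (hbl.trans one_eq.symm)
    have e2 : l' = 1 := N.injective (e1.trans (map_one N).symm)
    have e3 : L = (1 : RelM) := congrArg Subtype.val e2
    rw [L_eq, one_eq] at e3
    exact absurd (toRel_inj (by decide) (by decide) e3) (by decide)
  have hne : bp ≠ bl := by
    rintro rfl
    have e1 : N p' = N l' := Subtype.coe_injective (hbp.trans hbl.symm)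
    have e2 : p' = l' := N.injective e1
    have e3 : P = L := congrArg Subtype.val e2
    rw [P_eq, L_eq] at e3
    exact absurd (toRel_inj (by decide) (by decide) e3) (by decide)
  have i1 : evalMask bu bp bl wa1 = evalMask bu bp bl wb1 :=
    (key_iff N bu bp bl hbu hbp hbl wfu wfp wfl wa1 wb1).mp (by decide)
  have i2 : ¬(evalMask bu bp bl wa2 = evalMask bu bp bl wb2) := fun h =>
    absurd ((key_iff N bu bp bl hbu hbp hbl wfu wfp wfl wa2 wb2).mpr h) (by decide)
  have i3 : ¬(evalMask bu bp bl wa3 = evalMask bu bp bl wb3) := fun h =>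
    absurd ((key_iff N bu bp bl hbu hbp hbl wfu wfp wfl wa3 wb3).mpr h) (by decide)
  have hbpm : bp = mP ∨ bp = mL ∨ bp = mPLP := by
    rcases sqOne bp hbp40 hmaskp with h | h | h | h
    exacts [Or.inl h, Or.inr (Or.inl h), Or.inr (Or.inr h), absurd h hNp_ne]
  have hblm : bl = mP ∨ bl = mL ∨ bl = mPLP := by
    rcases sqOne bl hbl40 hmaskl with h | h | h | h
    exacts [Or.inl h, Or.inr (Or.inl h), Or.inr (Or.inr h), absurd h hNl_ne]
  rcases hbpm with rfl | rfl | rfl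
  · rcases hblm with rfl | rfl | rfl
    · exact absurd rfl hne
    · have hbum := survElim_mP_mL bu hbu40 i1 i2 i3
      rcases hbum with rfl | rfl
      · exact realize N mU mP mL vf10 vg10 (by decide) (by decide)
          (by decide) (by decide) hbu hbp hbl (by decide) (by decide) (by decide)
      · exact realize N mPUP mP mL vf4 vg4 (by decide) (by decide)
          (by decide) (by decide) hbu hbp hbl (by decide) (by decide) (by decide)
    · have hbum := survElim_mP_mPLP bu hbu40 i1 i2 i3
      rcases hbum with rfl | rfl
      · exact realize N mU mP mPLP vf2 vg2 (by decide) (by decide)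
          (by decide) (by decide) hbu hbp hbl (by decide) (by decide) (by decide)
      · exact realize N mPUP mP mPLP vf5 vg5 (by decide) (by decide)
          (by decide) (by decide) hbu hbp hbl (by decide) (by decide) (by decide)
  · rcases hblm with rfl | rfl | rfl
    · have hbum := survElim_mL_mP bu hbu40 i1 i2 i3
      rcases hbum with rfl | rfl
      · exact realize N mU mL mP vf7 vg7 (by decide) (by decide)
          (by decide) (by decide) hbu hbp hbl (by decide) (by decide) (by decide)
      · exact realize N mPUP mL mP vf3 vg3 (by decide) (by decide)
          (by decide) (by decide) hbu hbp hbl (by decide) (by decide) (by decide)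
    · exact absurd rfl hne
    · have hbum := survElim_mL_mPLP bu hbu40 i1 i2 i3
      rcases hbum with rfl | rfl
      · exact realize N mU mL mPLP vf12 vg12 (by decide) (by decide)
          (by decide) (by decide) hbu hbp hbl (by decide) (by decide) (by decide)
      · exact realize N mPUP mL mPLP vf11 vg11 (by decide) (by decide)
          (by decide) (by decide) hbu hbp hbl (by decide) (by decide) (by decide)
  · rcases hblm with rfl | rfl | rfl
    · have hbum := survElim_mPLP_mP bu hbu40 i1 i2 i3
      rcases hbum with rfl | rfl
      · exact realize N mU mPLP mP vf8 vg8 (by decide) (by decide)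
          (by decide) (by decide) hbu hbp hbl (by decide) (by decide) (by decide)
      · exact realize N mPUP mPLP mP vf9 vg9 (by decide) (by decide)
          (by decide) (by decide) hbu hbp hbl (by decide) (by decide) (by decide)
    · have hbum := survElim_mPLP_mL bu hbu40 i1 i2 i3
      rcases hbum with rfl | rfl
      · exact realize N mU mPLP mL vf1 vg1 (by decide) (by decide)
          (by decide) (by decide) hbu hbp hbl (by decide) (by decide) (by decide)
      · exact realize N mPUP mPLP mL vf6 vg6 (by decide) (by decide)
          (by decide) (by decide) hbu hbp hbl (by decide) (by decide) (by decide)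
    · exact absurd rfl hne

end CubeDance
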